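/- For positive reals α, β, n and positive integers p, r with r ≤ p and r ∣ p: (√(⌈log₂(p/r)⌉·α) + √(n·β))² + (log₂ r)·α + (r−1)·n·β ≤ 2(⌈log₂ p⌉·α + r·n·β). -/

import Mathlib

lemma clog_eq_ceil (k : ℕ) : ((Nat.clog 2 k : ℤ) : ℝ) = ((⌈Real.logb 2 (k:ℝ)⌉ : ℤ) : ℝ) := by
  congr 1
  rw [show ((2:ℝ)) = ((2:ℕ):ℝ) by norm_num, Real.ceil_logb_natCast (by positivity),
    Int.clog_natCast]

lemma clog_le_real (k : ℕ) : (Nat.clog 2 k : ℝ) ≤ Real.logb 2 (k:ℝ) + 1 := by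
  have h := clog_eq_ceil k
  have h2 := Int.ceil_lt_add_one (Real.logb 2 (k:ℝ))
  push_cast at h
  linarith

lemma real_le_clog (k : ℕ) : Real.logb 2 (k:ℝ) ≤ (Nat.clog 2 k : ℝ) := by
  have h := clog_eq_ceil k
  have h2 := Int.le_ceil (Real.logb 2 (k:ℝ))
  push_cast at h
  linarith

lemma clog_succ_le (k : ℕ) (hk : 0 < k) : Nat.clog 2 k + 1 ≤ Nat.clog 2 (2*k) := by
  have key : 2 ^ (Nat.clog 2 k) < 2 * k := by
    rcases Nat.lt_or_ge k 2 with h | h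
    · interval_cases k; simp
    · have h1 := Nat.pow_pred_clog_lt_self (b := 2) one_lt_two (x := k) h
      have hpos := Nat.clog_pos (b:=2) one_lt_two h
      rw [Nat.pred_eq_sub_one] at h1
      calc 2 ^ Nat.clog 2 k = 2 * 2 ^ (Nat.clog 2 k - 1) := by
            rw [← pow_succ']; congr 1; omega
        _ < 2 * k := by omega
  have := (Nat.lt_clog_iff_pow_lt one_lt_two).mpr key
  omega

theorem multi_broadcast_upper_bound (α β n : ℝ) (hα : 0 < α) (hβ : 0 < β)
    (hn : 0 < n) (p r : ℕ) (hp : 0 < p) (hr : 0 < r) (hrp : r ≤ p) (hdvd : r ∣ p) :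
    (Real.sqrt ((Nat.clog 2 (p / r) : ℝ) * α) + Real.sqrt (n * β)) ^ 2 +
        Real.logb 2 (r : ℝ) * α + ((r : ℝ) - 1) * n * β ≤
      2 * ((Nat.clog 2 p : ℝ) * α + (r : ℝ) * n * β) := by
  set k := p / r with hk
  have hkr : k * r = p := Nat.div_mul_cancel hdvd
  have hk1 : 0 < k := by
    rcases Nat.eq_zero_or_pos k with h | h
    · rw [h, zero_mul] at hkr; omega
    · exact h
  set A := (Nat.clog 2 k : ℝ) with hA
  set C := (Nat.clog 2 p : ℝ) with hC
  set L := Real.logb 2 (r : ℝ) with hL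
  have hA0 : 0 ≤ A := by positivity
  -- key: 2A + L ≤ 2C
  have hkey : 2 * A + L ≤ 2 * C := by
    rcases eq_or_lt_of_le (Nat.one_le_iff_ne_zero.mpr hr.ne' : 1 ≤ r) with h1 | h2
    · have : r = 1 := h1.symm
      subst this
      have : k = p := by omega
      simp [hL, hA, hC, this]
    · -- r ≥ 2
      have hr2 : 2 ≤ r := h2
      have hC1 : A + 1 ≤ C := by
        have h2k : 2 * k ≤ p := by nlinarith [hkr]
        have := clog_succ_le k hk1
        have hmono := Nat.clog_mono_right 2 h2k
        have : Nat.clog 2 k + 1 ≤ Nat.clog 2 p := le_trans this hmono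
        rw [hA, hC]; exact_mod_cast this
      have hC2 : (A - 1) + L ≤ C := by
        have hlogp : Real.logb 2 (p:ℝ) = Real.logb 2 (k:ℝ) + L := by
          rw [← hkr]
          push_cast
          rw [Real.logb_mul (by positivity) (by positivity)]
        have h3 := real_le_clog p
        have h4 := clog_le_real k
        rw [hlogp] at h3
        linarith
      linarith
  have hL0 : 0 ≤ L := Real.logb_nonneg one_lt_two (by exact_mod_cast hr)
  -- sqrt bound
  have hsq : (Real.sqrt (A * α) + Real.sqrt (n * β)) ^ 2 ≤ 2 * (A * α + n * β) := by
    have e1 : Real.sqrt (A * α) ^ 2 = A * α := Real.sq_sqrt (by positivity)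
    have e2 : Real.sqrt (n * β) ^ 2 = n * β := Real.sq_sqrt (by positivity)
    nlinarith [sq_nonneg (Real.sqrt (A * α) - Real.sqrt (n * β))]
  have hmul : (2 * A + L) * α ≤ 2 * C * α := by
    apply mul_le_mul_of_nonneg_right _ hα.le
    linarith
  have hrn : ((r : ℝ) + 1) * (n * β) ≤ 2 * (r : ℝ) * (n * β) := by
    have hr1 : (1 : ℝ) ≤ (r : ℝ) := by exact_mod_cast hr
    have h0 : 0 ≤ ((r:ℝ) - 1) * (n * β) := mul_nonneg (by linarith) (by positivity)
    nlinarith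
  nlinarith [hsq, hmul, hrn]
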